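/- Let p be a prime, n, m ≥ 1, and GR(p^n,m) = (ZMod (p^n))[X]/(f) for a monic basic irreducible f of degree m. Then there exists a unit γ of GR(p^n,m) whose multiplicative order is exactly p^m − 1 and whose image in the residue field GR(p^n,m)/(p) generates the multiplicative group of units of that residue field. -/

import Mathlib

open Polynomial AdjoinRoot

/-- The Galois ring `GR(p^n, m)` contains a unit `γ` of multiplicative order
exactly `p ^ m - 1` whose image in the residue field `GR(p^n,m)/(p)` generates the
multiplicative group of units of the residue field. -/
theorem galois_ring_exists_teichmuller_generator (p n m : ℕ) (hp : p.Prime)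
    (hn : 0 < n) (hm : 0 < m)
    (f : Polynomial (ZMod (p ^ n))) (hf : f.Monic) (hdeg : f.natDegree = m)
    (hirr : Irreducible (f.map (ZMod.castHom (dvd_pow_self p hn.ne') (ZMod p)))) :
    ∃ γ : (AdjoinRoot f)ˣ, orderOf γ = p ^ m - 1 ∧
      ∀ u : (AdjoinRoot f ⧸ Ideal.span {(p : AdjoinRoot f)})ˣ,
        u ∈ Subgroup.zpowers
          (Units.map (Ideal.Quotient.mk (Ideal.span {(p : AdjoinRoot f)})).toMonoidHom γ) := by
  haveI := Fact.mk hp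
  haveI := Fact.mk hirr
  haveI : Fact (1 < p ^ n) := ⟨Nat.one_lt_pow hn.ne' hp.one_lt⟩
  haveI : NeZero (p ^ n) := ⟨(pow_pos hp.pos n).ne'⟩
  set c : ZMod (p ^ n) →+* ZMod p := ZMod.castHom (dvd_pow_self p hn.ne') (ZMod p) with hc
  set fbar : Polynomial (ZMod p) := f.map c with hfbar
  set A := AdjoinRoot f with hA
  set B := AdjoinRoot fbar with hB
  have hcsurj : Function.Surjective c := ZMod.ringHom_surjective c
  -- A is finite
  haveI : Finite A := Finite.of_equiv _ (AdjoinRoot.powerBasisAux' hf).equivFun.toEquiv.symm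
  haveI : Finite Aˣ := inferInstance
  -- B is a finite field of cardinality p ^ m
  have hfbarMonic : fbar.Monic := hf.map c
  letI : Fintype B :=
    Fintype.ofEquiv _ (AdjoinRoot.powerBasisAux' hfbarMonic).equivFun.toEquiv.symm
  have hcardB : Fintype.card B = p ^ m := by
    rw [Fintype.card_congr (AdjoinRoot.powerBasisAux' hfbarMonic).equivFun.toEquiv,
      Fintype.card_fun, ZMod.card, Fintype.card_fin, hfbar,
      hf.natDegree_map, hdeg]
  -- the reduction homomorphism ψ : A →+* B
  have hroot : f.eval₂ ((AdjoinRoot.of fbar).comp c) (AdjoinRoot.root fbar) = 0 := by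
    rw [← Polynomial.eval₂_map, ← hfbar, AdjoinRoot.eval₂_root]
  set ψ : A →+* B := AdjoinRoot.lift ((AdjoinRoot.of fbar).comp c) (AdjoinRoot.root fbar) hroot
    with hψdef
  have hψ : ∀ Q : Polynomial (ZMod (p ^ n)),
      ψ (AdjoinRoot.mk f Q) = AdjoinRoot.mk fbar (Q.map c) := by
    intro Q
    rw [hψdef, AdjoinRoot.lift_mk, ← Polynomial.eval₂_map,
      ← AdjoinRoot.algebraMap_eq, ← Polynomial.aeval_def, AdjoinRoot.aeval_eq]
  have hψsurj : Function.Surjective ψ := by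
    intro b
    obtain ⟨q, rfl⟩ := AdjoinRoot.mk_surjective b
    obtain ⟨Q, rfl⟩ := Polynomial.map_surjective c hcsurj q
    exact ⟨AdjoinRoot.mk f Q, hψ Q⟩
  -- p ∣ a in ZMod (p^n) whenever c a = 0
  have hcker : ∀ a : ZMod (p ^ n), c a = 0 → (p : ZMod (p ^ n)) ∣ a := by
    intro a ha
    obtain ⟨k, rfl⟩ := ZMod.natCast_zmod_surjective a
    rw [map_natCast, ZMod.natCast_eq_zero_iff] at ha
    obtain ⟨t, rfl⟩ := ha
    exact ⟨(t : ZMod (p ^ n)), by push_cast; ring⟩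
  -- the kernel of ψ is span {p}
  have hker : RingHom.ker ψ = Ideal.span {(p : A)} := by
    apply le_antisymm
    · intro x hx
      obtain ⟨Q, rfl⟩ := AdjoinRoot.mk_surjective x
      rw [RingHom.mem_ker, hψ, AdjoinRoot.mk_eq_zero] at hx
      obtain ⟨h, hh⟩ := hx
      obtain ⟨H, rfl⟩ := Polynomial.map_surjective c hcsurj h
      have hzero : (Q - f * H).map c = 0 := by
        rw [Polynomial.map_sub, Polynomial.map_mul, hh, ← hfbar]; ring
      have hdvd : Polynomial.C (p : ZMod (p ^ n)) ∣ Q - f * H := by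
        rw [Polynomial.C_dvd_iff_dvd_coeff]
        intro i
        apply hcker
        rw [← Polynomial.coeff_map, hzero, Polynomial.coeff_zero]
      obtain ⟨S, hS⟩ := hdvd
      have hQ : AdjoinRoot.mk f Q = (p : A) * AdjoinRoot.mk f S := by
        have : Q = f * H + Polynomial.C (p : ZMod (p ^ n)) * S := by linear_combination hS
        rw [this, map_add, map_mul, map_mul, AdjoinRoot.mk_self, zero_mul, zero_add,
          AdjoinRoot.mk_C, map_natCast]
      rw [hQ]
      exact Ideal.mul_mem_right _ _ (Ideal.subset_span rfl)
    · rw [Ideal.span_le, Set.singleton_subset_iff]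
      have : ψ (p : A) = 0 := by
        rw [map_natCast, ← map_natCast (AdjoinRoot.of fbar) p, ZMod.natCast_self, map_zero]
      exact this
  -- the residue ring is isomorphic to the field B
  set K := A ⧸ Ideal.span {(p : A)} with hK
  haveI : Finite K := Quotient.finite _
  let e : K ≃+* B :=
    (Ideal.quotEquivOfEq hker.symm).trans (RingHom.quotientKerEquivOfSurjective hψsurj)
  let eu : Kˣ ≃* Bˣ := Units.mapEquiv e.toMulEquiv
  haveI : IsCyclic Kˣ := isCyclic_of_surjective (eu.symm : Bˣ →* Kˣ) eu.symm.surjective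
  letI : Fintype Kˣ := Fintype.ofFinite _
  have hcardK : Fintype.card Kˣ = p ^ m - 1 := by
    rw [Fintype.card_congr eu.toEquiv, Fintype.card_units, hcardB]
  obtain ⟨g, hg⟩ := IsCyclic.exists_generator (α := Kˣ)
  have hordg : orderOf g = p ^ m - 1 := by
    rw [orderOf_eq_card_of_forall_mem_zpowers hg, Nat.card_eq_fintype_card, hcardK]
  -- p is nilpotent in A
  have hpn : (p : A) ^ n = 0 := by
    rw [← Nat.cast_pow, ← map_natCast (AdjoinRoot.of f) (p ^ n), ZMod.natCast_self, map_zero]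
  -- lift g to a unit u of A
  set π : Aˣ →* Kˣ :=
    Units.map (Ideal.Quotient.mk (Ideal.span {(p : A)})).toMonoidHom with hπ
  obtain ⟨u, hu⟩ : ∃ u : Aˣ, π u = g := by
    obtain ⟨a, ha⟩ := Ideal.Quotient.mk_surjective (g : K)
    obtain ⟨b, hb⟩ := Ideal.Quotient.mk_surjective ((g⁻¹ : Kˣ) : K)
    have hab : a * b - 1 ∈ Ideal.span {(p : A)} := by
      rw [← Ideal.Quotient.eq_zero_iff_mem, map_sub, map_mul, ha, hb, map_one]
      simp
    obtain ⟨d, hd⟩ := Ideal.mem_span_singleton.mp hab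
    have hunit : IsUnit (a * b) := by
      have : a * b = 1 + (p : A) * d := by linear_combination hd
      rw [this]
      exact IsNilpotent.isUnit_one_add ((Commute.all _ d).isNilpotent_mul_right ⟨n, hpn⟩)
    have hua : IsUnit a := isUnit_of_mul_isUnit_left hunit
    obtain ⟨v, hv⟩ := hua
    refine ⟨v, Units.ext ?_⟩
    show Ideal.Quotient.mk _ (v : A) = (g : K)
    rw [hv, ha]
  -- the order of u is (p^m - 1) * p^s
  have hq1 : 1 ≤ p ^ m := Nat.one_le_pow m p hp.pos
  have hdvdq : p ^ m - 1 ∣ orderOf u := by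
    rw [← hordg, ← hu]; exact orderOf_map_dvd π u
  have hw1 : (u ^ (p ^ m - 1)) ^ p ^ (n - 1) = 1 := by
    have hπw : π (u ^ (p ^ m - 1)) = 1 := by
      rw [map_pow, hu, ← hordg, pow_orderOf_eq_one]
    have hmem : ((u ^ (p ^ m - 1) : Aˣ) : A) - 1 ∈ Ideal.span {(p : A)} := by
      have := congrArg (fun x : Kˣ => (x : K)) hπw
      simp only [hπ, Units.coe_map, RingHom.toMonoidHom_eq_coe, MonoidHom.coe_coe,
        Units.val_one] at this
      rw [← Ideal.Quotient.eq_zero_iff_mem, map_sub, map_one, this, sub_self]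
    obtain h := Ideal.mem_span_singleton.mp hmem
    have key := dvd_sub_pow_of_dvd_sub (p := p)
      (a := ((u ^ (p ^ m - 1) : Aˣ) : A)) (b := 1) (by simpa using h) (n - 1)
    rw [Nat.sub_add_cancel hn, hpn, one_pow] at key
    have : ((u ^ (p ^ m - 1) : Aˣ) : A) ^ p ^ (n - 1) = 1 := by
      have := (zero_dvd_iff.mp key)
      linear_combination this
    ext
    push_cast
    exact this
  obtain ⟨s, hs, hps⟩ := (Nat.dvd_prime_pow hp).mp (orderOf_dvd_of_pow_eq_one hw1)
  have hordw : orderOf (u ^ (p ^ m - 1)) = orderOf u / (p ^ m - 1) := by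
    rw [orderOf_pow, Nat.gcd_eq_right hdvdq]
  have hd : orderOf u = (p ^ m - 1) * p ^ s := by
    rw [← hps, hordw, Nat.mul_div_cancel' hdvdq]
  -- the Teichmüller lift
  refine ⟨u ^ p ^ s, ?_, ?_⟩
  · rw [orderOf_pow, hd, Nat.gcd_eq_right (dvd_mul_left _ _),
      Nat.mul_div_cancel _ (pow_pos hp.pos s)]
  · have hcop : Nat.Coprime (p ^ m - 1) (p ^ s) := by
      apply Nat.Coprime.pow_right
      have hnd : ¬ p ∣ p ^ m - 1 := by
        intro h
        have h2 : p ∣ p ^ m := dvd_pow_self p hm.ne'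
        have h3 : p ∣ p ^ m - (p ^ m - 1) := Nat.dvd_sub h2 h
        rw [Nat.sub_sub_self hq1] at h3
        exact hp.not_dvd_one h3
      exact (hp.coprime_iff_not_dvd.mpr hnd).symm
    have hmap : Units.map (Ideal.Quotient.mk (Ideal.span {(p : A)})).toMonoidHom (u ^ p ^ s)
        = g ^ p ^ s := by
      rw [← hπ, map_pow, hu]
    intro x
    have htop : Subgroup.zpowers (g ^ p ^ s) = ⊤ := by
      apply Subgroup.eq_top_of_card_eq
      rw [Nat.card_zpowers, orderOf_pow, hordg, hcop.gcd_eq_one, Nat.div_one,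
        Nat.card_eq_fintype_card, hcardK]
    rw [hmap, htop]
    exact Subgroup.mem_top x
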